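/- Let {H^k} in ℝ^{S×n} evolve as H^{k+1} = W^k(H^k + γΔ^k), where each W^k is row-stochastic and satisfies ‖W^{ℓ:t} − 1(ψ^t)ᵀ‖₂ ≤ C₂ρ^{ℓ−t} for stochastic vectors ψ^t, ρ ∈ (0,1). Define z̄^k = (ψ^k)ᵀH^k and E^k = ‖H^k − 1·z̄^k‖_F. Then E^{k+1} ≤ C₂ρ^k E^0 + C₂ ∑_{l=0}^{k} ρ^{k−l} γ‖Δ^l‖_F for all k ≥ 0. -/

import Mathlib

/-- Backward product of matrices: `Wprod W t m = W (t+m-1) * ⋯ * W (t+1) * W t`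
(with `m` factors), so that `W^{ℓ:t} = Wprod W t (ℓ - t + 1)` for `ℓ ≥ t`. -/
def Wprod {S : ℕ} (W : ℕ → Matrix (Fin S) (Fin S) ℝ) (t : ℕ) :
    ℕ → Matrix (Fin S) (Fin S) ℝ
  | 0 => 1
  | m + 1 => W (t + m) * Wprod W t m

/-- The spectral (ℓ₂-operator) norm of a real matrix, via its action on
Euclidean space. -/
noncomputable def l2OpNorm {S : ℕ} (A : Matrix (Fin S) (Fin S) ℝ) : ℝ :=
  ‖LinearMap.toContinuousLinearMap (Matrix.toEuclideanLin A)‖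

/-- The Frobenius norm of a real matrix. -/
noncomputable def froNorm {S n : ℕ} (A : Matrix (Fin S) (Fin n) ℝ) : ℝ :=
  Real.sqrt (∑ i, ∑ j, A i j ^ 2)

/-- geometric decay of the consensus error for the perturbed
consensus dynamics `H^{k+1} = W^k (H^k + γ Δ^k)`, where
`z̄^k = (ψ^k)ᵀ H^k` and `E^k = ‖H^k − 1 (z̄^k)ᵀ‖_F`. -/
noncomputable def toEuc {S n : ℕ} (A : Matrix (Fin S) (Fin n) ℝ) :
    EuclideanSpace ℝ (Fin S × Fin n) := WithLp.toLp 2 (fun p : Fin S × Fin n => A p.1 p.2)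

lemma fro_nonneg {S n : ℕ} (A : Matrix (Fin S) (Fin n) ℝ) : 0 ≤ froNorm A :=
  Real.sqrt_nonneg _

lemma fro_eq {S n : ℕ} (A : Matrix (Fin S) (Fin n) ℝ) : froNorm A = ‖toEuc A‖ := by
  rw [EuclideanSpace.norm_eq, froNorm]
  congr 1
  rw [Fintype.sum_prod_type]
  simp [toEuc, Real.norm_eq_abs, sq_abs]

lemma fro_add_le {S n : ℕ} (A B : Matrix (Fin S) (Fin n) ℝ) :
    froNorm (A + B) ≤ froNorm A + froNorm B := by
  rw [fro_eq, fro_eq, fro_eq]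
  rw [show toEuc (A + B) = toEuc A + toEuc B by ext p; simp [toEuc]]
  exact norm_add_le (toEuc A) (toEuc B)

lemma fro_sum_le {S n : ℕ} {ι : Type*} (s : Finset ι) (f : ι → Matrix (Fin S) (Fin n) ℝ) :
    froNorm (∑ l ∈ s, f l) ≤ ∑ l ∈ s, froNorm (f l) := by
  have h : toEuc (∑ l ∈ s, f l) = ∑ l ∈ s, toEuc (f l) := by
    ext p
    rw [WithLp.ofLp_sum, Finset.sum_apply p s fun l => (toEuc (f l)).ofLp]
    simp [toEuc, Matrix.sum_apply]
  rw [fro_eq, h]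
  calc ‖∑ l ∈ s, toEuc (f l)‖ ≤ ∑ l ∈ s, ‖toEuc (f l)‖ := norm_sum_le _ _
    _ = ∑ l ∈ s, froNorm (f l) := by simp [fro_eq]

lemma fro_smul {S n : ℕ} (c : ℝ) (A : Matrix (Fin S) (Fin n) ℝ) :
    froNorm (c • A) = |c| * froNorm A := by
  rw [fro_eq, fro_eq]
  have h : toEuc (c • A) = c • toEuc A := by ext p; simp [toEuc]
  rw [h, norm_smul, Real.norm_eq_abs]

lemma euc_norm_sq {S : ℕ} (x : EuclideanSpace ℝ (Fin S)) : ‖x‖ ^ 2 = ∑ i, x i ^ 2 := by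
  rw [EuclideanSpace.norm_eq, Real.sq_sqrt (by positivity)]
  simp [Real.norm_eq_abs, sq_abs]

lemma fro_mul_le {S n : ℕ} (A : Matrix (Fin S) (Fin S) ℝ) (B : Matrix (Fin S) (Fin n) ℝ) :
    froNorm (A * B) ≤ l2OpNorm A * froNorm B := by
  set T := LinearMap.toContinuousLinearMap (Matrix.toEuclideanLin A) with hT
  set col : Fin n → EuclideanSpace ℝ (Fin S) := fun j => WithLp.toLp 2 (fun i => B i j) with hcoldef
  have hcol : ∀ (j : Fin n) (i : Fin S), (A * B) i j = T (col j) i := by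
    intro j i
    simp [hT, hcoldef, Matrix.mul_apply, Matrix.toEuclideanLin, Matrix.mulVec,
      dotProduct]
  have fro_sq : ∀ {S' n' : ℕ} (M : Matrix (Fin S') (Fin n') ℝ),
      froNorm M ^ 2 = ∑ i, ∑ j, M i j ^ 2 := by
    intro S' n' M; exact Real.sq_sqrt (by positivity)
  have key : froNorm (A * B) ^ 2 ≤ (l2OpNorm A * froNorm B) ^ 2 := by
    rw [fro_sq, Finset.sum_comm]
    calc ∑ j, ∑ i, (A * B) i j ^ 2
        = ∑ j : Fin n, ‖T (col j)‖ ^ 2 := by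
          refine Finset.sum_congr rfl fun j _ => ?_
          rw [euc_norm_sq]
          exact Finset.sum_congr rfl fun i _ => by rw [hcol j i]
      _ ≤ ∑ j : Fin n, (‖T‖ * ‖col j‖) ^ 2 :=
          Finset.sum_le_sum fun j _ =>
            pow_le_pow_left₀ (norm_nonneg _) (T.le_opNorm _) 2
      _ = ‖T‖ ^ 2 * ∑ j : Fin n, ‖col j‖ ^ 2 := by
          rw [Finset.mul_sum]; exact Finset.sum_congr rfl fun j _ => by ring
      _ = (l2OpNorm A) ^ 2 * froNorm B ^ 2 := by
          rw [fro_sq, Finset.sum_comm]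
          congr 1
          exact Finset.sum_congr rfl fun j _ => by rw [euc_norm_sq]
      _ = (l2OpNorm A * froNorm B) ^ 2 := (mul_pow _ _ _).symm
  have h0 : 0 ≤ l2OpNorm A * froNorm B := mul_nonneg (norm_nonneg _) (fro_nonneg _)
  nlinarith [fro_nonneg (A * B)]

lemma l2_nonneg {S : ℕ} (A : Matrix (Fin S) (Fin S) ℝ) : 0 ≤ l2OpNorm A :=
  norm_nonneg _

lemma Wprod_succ {S : ℕ} (W : ℕ → Matrix (Fin S) (Fin S) ℝ) (t m : ℕ) :
    Wprod W t (m + 1) = W (t + m) * Wprod W t m := rfl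

lemma mul_rowsum {S : ℕ} (A B : Matrix (Fin S) (Fin S) ℝ)
    (hA : ∀ i, ∑ j, A i j = 1) (hB : ∀ i, ∑ j, B i j = 1) :
    ∀ i, ∑ j, (A * B) i j = 1 := by
  intro i
  simp only [Matrix.mul_apply]
  rw [Finset.sum_comm]
  simp_rw [← Finset.mul_sum, hB, mul_one]
  exact hA i

lemma Wprod_rowsum {S : ℕ} (W : ℕ → Matrix (Fin S) (Fin S) ℝ)
    (hWrow : ∀ k i, ∑ j, W k i j = 1) (t m : ℕ) :
    ∀ i, ∑ j, Wprod W t m i j = 1 := by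
  induction m with
  | zero => intro i; simp [Wprod, Matrix.one_apply]
  | succ m ih =>
    rw [Wprod_succ]
    exact mul_rowsum _ _ (hWrow (t + m)) ih

lemma J_mul {S n : ℕ} (v : Fin S → ℝ) (M : Matrix (Fin S) (Fin n) ℝ) :
    (Matrix.of fun _ j => v j : Matrix (Fin S) (Fin S) ℝ) * M
      = Matrix.of fun _ j => Matrix.vecMul v M j := by
  ext i j
  simp [Matrix.mul_apply, Matrix.vecMul, dotProduct]

lemma rowsum_mul_J {S : ℕ} (M : Matrix (Fin S) (Fin S) ℝ)
    (hM : ∀ i, ∑ j, M i j = 1) (v : Fin S → ℝ) :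
    M * (Matrix.of fun _ j => v j) = (Matrix.of fun _ j => v j) := by
  ext i j
  simp only [Matrix.mul_apply, Matrix.of_apply]
  rw [← Finset.sum_mul, hM, one_mul]

theorem stmt_5 {S n : ℕ}
    (W : ℕ → Matrix (Fin S) (Fin S) ℝ)
    (hWnn : ∀ k i j, 0 ≤ W k i j)
    (hWrow : ∀ k i, ∑ j, W k i j = 1)
    (ψ : ℕ → Fin S → ℝ)
    (hψnn : ∀ t i, 0 ≤ ψ t i)
    (hψsum : ∀ t, ∑ i, ψ t i = 1)
    (C₂ ρ : ℝ) (hC₂ : 0 < C₂) (hρ0 : 0 < ρ) (hρ1 : ρ < 1)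
    (hmix : ∀ t ℓ : ℕ, t ≤ ℓ →
      l2OpNorm (Wprod W t (ℓ - t + 1) - Matrix.of fun _ j => ψ t j) ≤
        C₂ * ρ ^ (ℓ - t))
    (hψW : ∀ t, Matrix.vecMul (ψ (t + 1)) (W t) = ψ t)
    (γ : ℝ) (hγ : 0 < γ)
    (H Δ : ℕ → Matrix (Fin S) (Fin n) ℝ)
    (hdyn : ∀ k, H (k + 1) = W k * (H k + γ • Δ k)) :
    ∀ k : ℕ,
      froNorm (H (k + 1) -
          Matrix.of fun _ j => Matrix.vecMul (ψ (k + 1)) (H (k + 1)) j) ≤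
        C₂ * ρ ^ k *
            froNorm (H 0 - Matrix.of fun _ j => Matrix.vecMul (ψ 0) (H 0) j)
          + C₂ * ∑ l ∈ Finset.range (k + 1), ρ ^ (k - l) * γ * froNorm (Δ l) := by
  -- ψ through products
  have psi_prod : ∀ t m, Matrix.vecMul (ψ (t + m)) (Wprod W t m) = ψ t := by
    intro t m
    induction m with
    | zero => simp [Wprod, Matrix.vecMul_one]
    | succ m ih =>
      rw [Wprod_succ, ← Matrix.vecMul_vecMul]
      rw [show t + (m + 1) = (t + m) + 1 from rfl, hψW (t + m)]
      exact ih
  -- unrolled dynamics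
  have unroll : ∀ k, H (k + 1) = Wprod W 0 (k + 1) * H 0
      + ∑ l ∈ Finset.range (k + 1), Wprod W l (k - l + 1) * (γ • Δ l) := by
    intro k
    induction k with
    | zero =>
      rw [hdyn 0, Matrix.mul_add]
      simp [Wprod_succ, Wprod]
    | succ k ih =>
      rw [hdyn (k + 1), ih, Matrix.mul_add, Matrix.mul_add, Matrix.mul_sum,
        Finset.sum_range_succ (fun l => Wprod W l (k + 1 - l + 1) * (γ • Δ l))]
      have h0 : Wprod W 0 (k + 1 + 1) = W (k + 1) * Wprod W 0 (k + 1) := by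
        rw [Wprod_succ, Nat.zero_add]
      have hlast : Wprod W (k + 1) (k + 1 - (k + 1) + 1) * (γ • Δ (k + 1))
          = W (k + 1) * (γ • Δ (k + 1)) := by
        rw [show k + 1 - (k + 1) + 1 = 1 by omega, Wprod_succ]
        simp [Wprod]
      have hterm : ∀ l ∈ Finset.range (k + 1),
          W (k + 1) * (Wprod W l (k - l + 1) * (γ • Δ l))
            = Wprod W l (k + 1 - l + 1) * (γ • Δ l) := by
        intro l hl
        have hlk : l ≤ k := Nat.lt_succ_iff.mp (Finset.mem_range.mp hl)
        have hw : Wprod W l ((k - l + 1) + 1) = W (k + 1) * Wprod W l (k - l + 1) := by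
          rw [Wprod_succ, show l + (k - l + 1) = k + 1 by omega]
        rw [show k + 1 - l + 1 = (k - l + 1) + 1 by omega, hw, Matrix.mul_assoc]
      rw [h0, hlast, Finset.sum_congr rfl hterm, Matrix.mul_assoc]
      abel
  intro k
  -- J (k+1) * Wprod W l (k - l + 1) = J l for l ≤ k
  have JW : ∀ l, l ≤ k →
      (Matrix.of fun _ j => ψ (k + 1) j : Matrix (Fin S) (Fin S) ℝ)
          * Wprod W l (k - l + 1) = Matrix.of fun _ j => ψ l j := by
    intro l hl
    rw [J_mul]
    have h := psi_prod l (k - l + 1)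
    rw [show l + (k - l + 1) = k + 1 by omega] at h
    rw [h]
  -- key decomposition
  have key : H (k + 1) -
      Matrix.of (fun _ j => Matrix.vecMul (ψ (k + 1)) (H (k + 1)) j) =
      (Wprod W 0 (k + 1) - Matrix.of fun _ j => ψ 0 j)
          * (H 0 - Matrix.of fun _ j => Matrix.vecMul (ψ 0) (H 0) j)
        + ∑ l ∈ Finset.range (k + 1),
            (Wprod W l (k - l + 1) - Matrix.of fun _ j => ψ l j) * (γ • Δ l) := by
    have h1 : (Matrix.of (fun _ j => Matrix.vecMul (ψ (k + 1)) (H (k + 1)) j)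
        : Matrix (Fin S) (Fin n) ℝ)
        = (Matrix.of fun _ j => ψ (k + 1) j : Matrix (Fin S) (Fin S) ℝ) * H (k + 1) :=
      (J_mul _ _).symm
    rw [h1, unroll k, Matrix.mul_add, Matrix.mul_sum]
    have JW0 : (Matrix.of fun _ j => ψ (k + 1) j : Matrix (Fin S) (Fin S) ℝ)
        * Wprod W 0 (k + 1) = Matrix.of fun _ j => ψ 0 j := by
      have := JW 0 (Nat.zero_le k)
      rwa [Nat.sub_zero] at this
    have e1 : (Wprod W 0 (k + 1) - Matrix.of fun _ j => ψ 0 j)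
        * (H 0 - Matrix.of fun _ j => Matrix.vecMul (ψ 0) (H 0) j)
        = Wprod W 0 (k + 1) * H 0
          - (Matrix.of fun _ j => ψ 0 j : Matrix (Fin S) (Fin S) ℝ) * H 0 := by
      rw [show (Matrix.of (fun _ j => Matrix.vecMul (ψ 0) (H 0) j)
          : Matrix (Fin S) (Fin n) ℝ)
          = (Matrix.of fun _ j => ψ 0 j : Matrix (Fin S) (Fin S) ℝ) * H 0 from
          (J_mul _ _).symm]
      rw [Matrix.sub_mul, Matrix.mul_sub, Matrix.mul_sub,
        ← Matrix.mul_assoc, ← Matrix.mul_assoc,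
        rowsum_mul_J _ (Wprod_rowsum W hWrow 0 (k + 1)) (ψ 0),
        rowsum_mul_J (Matrix.of fun _ j => ψ 0 j) (fun i => by simpa using hψsum 0) (ψ 0)]
      abel
    have e2 : ∀ l ∈ Finset.range (k + 1),
        (Wprod W l (k - l + 1) - Matrix.of fun _ j => ψ l j) * (γ • Δ l)
          = Wprod W l (k - l + 1) * (γ • Δ l)
            - (Matrix.of fun _ j => ψ (k + 1) j : Matrix (Fin S) (Fin S) ℝ)
                * (Wprod W l (k - l + 1) * (γ • Δ l)) := by
      intro l hl
      have hlk : l ≤ k := Nat.lt_succ_iff.mp (Finset.mem_range.mp hl)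
      rw [Matrix.sub_mul, ← Matrix.mul_assoc, JW l hlk]
    rw [e1, Finset.sum_congr rfl e2, Finset.sum_sub_distrib,
      ← Matrix.mul_assoc, JW0]
    abel
  rw [key]
  -- norm estimates
  set E0 := froNorm (H 0 - Matrix.of fun _ j => Matrix.vecMul (ψ 0) (H 0) j) with hE0
  have hbound0 : froNorm ((Wprod W 0 (k + 1) - Matrix.of fun _ j => ψ 0 j)
      * (H 0 - Matrix.of fun _ j => Matrix.vecMul (ψ 0) (H 0) j))
      ≤ C₂ * ρ ^ k * E0 := by
    calc _ ≤ l2OpNorm (Wprod W 0 (k + 1) - Matrix.of fun _ j => ψ 0 j) * E0 :=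
        fro_mul_le _ _
      _ ≤ C₂ * ρ ^ k * E0 := by
        have h := hmix 0 k (Nat.zero_le k)
        rw [Nat.sub_zero] at h
        exact mul_le_mul_of_nonneg_right h (fro_nonneg _)
  have hboundl : ∀ l ∈ Finset.range (k + 1),
      froNorm ((Wprod W l (k - l + 1) - Matrix.of fun _ j => ψ l j) * (γ • Δ l))
        ≤ C₂ * (ρ ^ (k - l) * γ * froNorm (Δ l)) := by
    intro l hl
    have hlk : l ≤ k := Nat.lt_succ_iff.mp (Finset.mem_range.mp hl)
    rw [Matrix.mul_smul, fro_smul, abs_of_pos hγ]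
    have h1 : froNorm ((Wprod W l (k - l + 1) - Matrix.of fun _ j => ψ l j) * Δ l)
        ≤ C₂ * ρ ^ (k - l) * froNorm (Δ l) := by
      calc _ ≤ l2OpNorm (Wprod W l (k - l + 1) - Matrix.of fun _ j => ψ l j)
            * froNorm (Δ l) := fro_mul_le _ _
        _ ≤ C₂ * ρ ^ (k - l) * froNorm (Δ l) :=
            mul_le_mul_of_nonneg_right (hmix l k hlk) (fro_nonneg _)
    calc γ * froNorm ((Wprod W l (k - l + 1) - Matrix.of fun _ j => ψ l j) * Δ l)
        ≤ γ * (C₂ * ρ ^ (k - l) * froNorm (Δ l)) :=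
          mul_le_mul_of_nonneg_left h1 (le_of_lt hγ)
      _ = C₂ * (ρ ^ (k - l) * γ * froNorm (Δ l)) := by ring
  calc froNorm _ ≤
      froNorm ((Wprod W 0 (k + 1) - Matrix.of fun _ j => ψ 0 j)
        * (H 0 - Matrix.of fun _ j => Matrix.vecMul (ψ 0) (H 0) j))
      + froNorm (∑ l ∈ Finset.range (k + 1),
          (Wprod W l (k - l + 1) - Matrix.of fun _ j => ψ l j) * (γ • Δ l)) :=
      fro_add_le _ _
    _ ≤ C₂ * ρ ^ k * E0 + ∑ l ∈ Finset.range (k + 1),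
          C₂ * (ρ ^ (k - l) * γ * froNorm (Δ l)) := by
        refine add_le_add hbound0 ?_
        calc _ ≤ ∑ l ∈ Finset.range (k + 1),
              froNorm ((Wprod W l (k - l + 1) - Matrix.of fun _ j => ψ l j)
                * (γ • Δ l)) := fro_sum_le _ _
          _ ≤ _ := Finset.sum_le_sum hboundl
    _ = C₂ * ρ ^ k * E0
        + C₂ * ∑ l ∈ Finset.range (k + 1), ρ ^ (k - l) * γ * froNorm (Δ l) := by
        rw [Finset.mul_sum]
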